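/- Let α > 0 and let h : [r₀, r₁] → ℝ be a C¹ function with r₁^α · |h(r₁)|² ≤ D₀. Then (2/α)·r₀^α·|h(r₀)|² + ∫_{r₀}^{r₁} r^{α−1} |h(r)|² dr ≤ (4/α²) ∫_{r₀}^{r₁} r^{α+1} |h'(r)|² dr + (2/α)·D₀. -/

import Mathlib

/-- One-dimensional Hardy inequality with boundary term at the left endpoint
(Lemma `HardyIneqRHS`): for `α > 0` and `h` a `C¹` function on `[r₀, r₁]` with
`r₁^α |h(r₁)|² ≤ D₀`, one has
`(2/α) r₀^α |h(r₀)|² + ∫_{r₀}^{r₁} r^{α−1} |h(r)|² dr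
  ≤ (4/α²) ∫_{r₀}^{r₁} r^{α+1} |h'(r)|² dr + (2/α) D₀`. -/
theorem hardy_inequality_left_boundary
    (α r₀ r₁ D₀ : ℝ) (h h' : ℝ → ℝ)
    (hα : 0 < α) (hr₀ : 0 < r₀) (hr : r₀ ≤ r₁) (hD₀ : 0 ≤ D₀)
    (hderiv : ∀ r ∈ Set.Icc r₀ r₁, HasDerivAt h (h' r) r)
    (hcont : ContinuousOn h' (Set.Icc r₀ r₁))
    (hbdry : r₁ ^ α * |h r₁| ^ 2 ≤ D₀) :
    (2 / α) * r₀ ^ α * |h r₀| ^ 2 + ∫ r in r₀..r₁, r ^ (α - 1) * |h r| ^ 2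
      ≤ (4 / α ^ 2) * (∫ r in r₀..r₁, r ^ (α + 1) * |h' r| ^ 2) + (2 / α) * D₀ := by
  simp only [sq_abs]
  have hne : ∀ r ∈ Set.Icc r₀ r₁, (0:ℝ) < r := fun r hr' => lt_of_lt_of_le hr₀ hr'.1
  have hIcc : Set.uIcc r₀ r₁ = Set.Icc r₀ r₁ := Set.uIcc_of_le hr
  have hcontu : ContinuousOn h (Set.Icc r₀ r₁) := fun r hr' =>
    ((hderiv r hr').continuousAt).continuousWithinAt
  have hrpow : ∀ β : ℝ, ContinuousOn (fun r : ℝ => r ^ β) (Set.Icc r₀ r₁) := by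
    intro β
    apply ContinuousOn.rpow_const continuousOn_id
    exact fun r hr' => Or.inl (hne r hr').ne'
  have hInt1 : IntervalIntegrable (fun r => r ^ (α - 1) * h r ^ 2)
      MeasureTheory.volume r₀ r₁ := by
    apply ContinuousOn.intervalIntegrable
    rw [hIcc]
    exact (hrpow _).mul (hcontu.pow 2)
  have hInt2 : IntervalIntegrable (fun r => r ^ (α + 1) * h' r ^ 2)
      MeasureTheory.volume r₀ r₁ := by
    apply ContinuousOn.intervalIntegrable
    rw [hIcc]
    exact (hrpow _).mul (hcont.pow 2)
  have hInt3 : IntervalIntegrable (fun r => 2 * r ^ α * (h r * h' r))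
      MeasureTheory.volume r₀ r₁ := by
    apply ContinuousOn.intervalIntegrable
    rw [hIcc]
    exact (continuousOn_const.mul (hrpow _)).mul (hcontu.mul hcont)
  have hInt1' : IntervalIntegrable (fun r => α * (r ^ (α - 1) * h r ^ 2))
      MeasureTheory.volume r₀ r₁ := hInt1.const_mul α
  have hF : ∀ r ∈ Set.uIcc r₀ r₁, HasDerivAt (fun r => r ^ α * h r ^ 2)
      (α * (r ^ (α - 1) * h r ^ 2) + 2 * r ^ α * (h r * h' r)) r := by
    intro r hr'
    rw [hIcc] at hr'
    have h1 : HasDerivAt (fun r : ℝ => r ^ α) (α * r ^ (α - 1)) r :=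
      Real.hasDerivAt_rpow_const (Or.inl (hne r hr').ne')
    have h2 : HasDerivAt (fun r => h r ^ 2) (2 * h r ^ 1 * h' r) r := (hderiv r hr').pow 2
    have : HasDerivAt (fun r => r ^ α * h r ^ 2) _ r := h1.mul h2
    convert this using 1
    ring
  have hFTC := intervalIntegral.integral_eq_sub_of_hasDerivAt hF (hInt1'.add hInt3)
  rw [intervalIntegral.integral_add hInt1' hInt3,
    intervalIntegral.integral_const_mul] at hFTC
  -- pointwise AM-GM bound
  have hptw : ∀ r ∈ Set.Icc r₀ r₁,
      -((α/2) * (r ^ (α - 1) * h r ^ 2) + (2/α) * (r ^ (α + 1) * h' r ^ 2))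
        ≤ 2 * r ^ α * (h r * h' r) := by
    intro r hr'
    have hrp : (0:ℝ) < r := hne r hr'
    have e1 : r ^ (α - 1) = r ^ α / r := by
      rw [Real.rpow_sub hrp, Real.rpow_one]
    have e2 : r ^ (α + 1) = r ^ α * r := by
      rw [Real.rpow_add hrp, Real.rpow_one]
    have hpa : (0:ℝ) < r ^ α := Real.rpow_pos_of_pos hrp α
    have key : (α/2) * (r ^ (α - 1) * h r ^ 2) + 2 * r ^ α * (h r * h' r)
        + (2/α) * (r ^ (α + 1) * h' r ^ 2)
        = (r ^ α / (2 * α * r)) * (α * h r + 2 * r * h' r) ^ 2 := by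
      rw [e1, e2]
      field_simp
      ring
    nlinarith [mul_nonneg (le_of_lt (div_pos hpa (by positivity : (0:ℝ) < 2 * α * r)))
      (sq_nonneg (α * h r + 2 * r * h' r))]
  have hIntNeg : IntervalIntegrable
      (fun r => -((α/2) * (r ^ (α - 1) * h r ^ 2) + (2/α) * (r ^ (α + 1) * h' r ^ 2)))
      MeasureTheory.volume r₀ r₁ := ((hInt1.const_mul (α/2)).add (hInt2.const_mul (2/α))).neg
  have hmono := intervalIntegral.integral_mono_on hr hIntNeg hInt3 hptw
  rw [intervalIntegral.integral_neg,
    intervalIntegral.integral_add (hInt1.const_mul (α/2)) (hInt2.const_mul (2/α)),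
    intervalIntegral.integral_const_mul, intervalIntegral.integral_const_mul] at hmono
  set I := ∫ r in r₀..r₁, r ^ (α - 1) * h r ^ 2 with hI
  set J := ∫ r in r₀..r₁, r ^ (α + 1) * h' r ^ 2 with hJ
  set E := ∫ r in r₀..r₁, 2 * r ^ α * (h r * h' r) with hE
  -- hFTC : α * I + E = r₁^α h(r₁)² - r₀^α h(r₀)²
  -- hmono : -((α/2)*I + (2/α)*J) ≤ E
  rw [sq_abs] at hbdry
  have key : α * I ≤ D₀ - r₀ ^ α * h r₀ ^ 2 + ((α/2) * I + (2/α) * J) := by linarith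
  have key2 : (α/2) * I ≤ D₀ - r₀ ^ α * h r₀ ^ 2 + (2/α) * J := by linarith
  have h3 := mul_le_mul_of_nonneg_left key2 (by positivity : (0:ℝ) ≤ 2/α)
  have e3 : (2/α) * ((α/2) * I) = I := by field_simp
  have e4 : (2/α) * (D₀ - r₀ ^ α * h r₀ ^ 2 + (2/α) * J)
      = (2/α) * D₀ - (2/α) * (r₀ ^ α * h r₀ ^ 2) + (4/α^2) * J := by
    field_simp
    ring
  rw [e3, e4] at h3
  have e5 : (2/α) * r₀ ^ α * h r₀ ^ 2 = (2/α) * (r₀ ^ α * h r₀ ^ 2) := by ring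
  rw [e5]
  linarith
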